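/- Let S be a semigroup and let p be a strongly productive ultrafilter on S that is multiplicatively isomorphic to an ordered union ultrafilter. Then p is sparse. -/

import Mathlib

/-- `𝔽`: the collection of finite nonempty subsets of `ℕ`. -/
abbrev FinsetNat := {a : Finset ℕ // a.Nonempty}

/-- `listMul a l` is the product `a * l₀ * l₁ * ⋯` of a nonempty list in a magma. -/
def listMul {S : Type*} [Mul S] : S → List S → S
  | a, [] => a
  | a, b :: l => a * listMul b l

/-- `finsetMul x a` is the product `∏_{i ∈ a} x i`, taken in increasing order of indices
(junk value `x 0` if `a` is empty). -/
def finsetMul {S : Type*} [Mul S] (x : ℕ → S) (a : Finset ℕ) : S :=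
  match (a.sort (· ≤ ·)).map x with
  | [] => x 0
  | b :: l => listMul b l

/-- `FPIn x D` is the set of products `∏_{i ∈ a} x i` (in increasing order of indices), where
`a` ranges over the finite nonempty subsets of `D`. -/
def FPIn {S : Type*} [Semigroup S] (x : ℕ → S) (D : Set ℕ) : Set S :=
  {s | ∃ a : Finset ℕ, a.Nonempty ∧ ↑a ⊆ D ∧ s = finsetMul x a}

/-- `FPfin x` is the set of products `∏_{i ∈ a} x i` (in increasing order of indices), where
`a` ranges over all finite nonempty subsets of `ℕ`. -/
def FPfin {S : Type*} [Semigroup S] (x : ℕ → S) : Set S :=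
  FPIn x Set.univ

/-- An ultrafilter `p` on a semigroup `S` is *strongly productive* if every member of `p`
contains a set of the form `FP x` that itself belongs to `p`. -/
def StronglyProductive {S : Type*} [Semigroup S] (p : Ultrafilter S) : Prop :=
  ∀ A ∈ p, ∃ x : ℕ → S, FPfin x ⊆ A ∧ FPfin x ∈ p

/-- A sequence in `𝔽` is *ordered* if `max (b n) < min (b (n+1))` for all `n`. -/
def OrderedSeq (b : ℕ → FinsetNat) : Prop :=
  ∀ n : ℕ, (b n : Finset ℕ).max' (b n).2 < (b (n + 1) : Finset ℕ).min' (b (n + 1)).2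

/-- `FU b` is the set of unions `⋃_{i ∈ a} b i` with `a` a finite nonempty subset of `ℕ`. -/
def FU (b : ℕ → FinsetNat) : Set FinsetNat :=
  {c | ∃ a : Finset ℕ, a.Nonempty ∧ (c : Finset ℕ) = a.biUnion fun i => (b i : Finset ℕ)}

/-- An ultrafilter `q` on `𝔽` is an *ordered union ultrafilter* if every member of `q` contains
a set of the form `FU b`, with `b` ordered, that itself belongs to `q`. -/
def OrderedUnionUltrafilter (q : Ultrafilter FinsetNat) : Prop :=
  ∀ A ∈ q, ∃ b : ℕ → FinsetNat, OrderedSeq b ∧ FU b ⊆ A ∧ FU b ∈ q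

/-- A strongly productive ultrafilter `p` on `S` is *multiplicatively isomorphic to an ordered
union ultrafilter* if there is a sequence `x` in `S` such that `a ↦ ∏_{i ∈ a} x i` is injective
and `{f⁻¹[A] : A ∈ p}` is an ordered union ultrafilter on `𝔽`. -/
def MultIsoOrderedUnion {S : Type*} [Semigroup S] (p : Ultrafilter S) : Prop :=
  ∃ x : ℕ → S, Function.Injective (fun a : FinsetNat => finsetMul x (a : Finset ℕ)) ∧
    ∃ q : Ultrafilter FinsetNat, OrderedUnionUltrafilter q ∧
      ∀ B : Set FinsetNat,
        B ∈ q ↔ ∃ A ∈ p, B = (fun a : FinsetNat => finsetMul x (a : Finset ℕ)) ⁻¹' A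

/-- A strongly productive ultrafilter `p` on `S` is *sparse* if for every `A ∈ p` there are a
sequence `x` in `S` and an infinite set `D ⊆ ℕ` with infinite complement such that
`FP x ⊆ A` and the set of finite products of the subsequence of `x` indexed by `D` is in `p`. -/
def SparseSP {S : Type*} [Semigroup S] (p : Ultrafilter S) : Prop :=
  ∀ A ∈ p, ∃ (x : ℕ → S) (D : Set ℕ), D.Infinite ∧ D.compl.Infinite ∧
    FPfin x ⊆ A ∧ FPIn x D ∈ p

/- ### auxiliary lemmas -/

lemma sep_of_ordered {b : ℕ → FinsetNat} (hb : OrderedSeq b) {i j : ℕ} (hij : i < j)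
    {s t : ℕ} (hs : s ∈ (b i : Finset ℕ)) (ht : t ∈ (b j : Finset ℕ)) : s < t := by
  have key : ∀ j i, i < j → (b i : Finset ℕ).max' (b i).2 < (b j : Finset ℕ).min' (b j).2 := by
    intro j
    induction j with
    | zero => omega
    | succ m ih =>
      intro i hi
      rcases Nat.lt_succ_iff_lt_or_eq.mp hi with h | rfl
      · exact lt_of_lt_of_le (ih i h)
          (le_trans (Finset.min'_le _ _ (Finset.max'_mem _ _)) (le_of_lt (hb m)))
      · exact hb i
  calc s ≤ (b i : Finset ℕ).max' (b i).2 := Finset.le_max' _ _ hs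
    _ < (b j : Finset ℕ).min' (b j).2 := key j i hij
    _ ≤ t := Finset.min'_le _ _ ht

lemma max'_lt_min' {c1 c2 : Finset ℕ} (h1 : c1.Nonempty) (h2 : c2.Nonempty)
    (h : ∀ s ∈ c1, ∀ t ∈ c2, s < t) : c1.max' h1 < c2.min' h2 :=
  h _ (Finset.max'_mem _ _) _ (Finset.min'_mem _ _)

lemma listMul_append {S : Type*} [Semigroup S] (a : S) (l1 : List S) (c : S) (l2 : List S) :
    listMul a (l1 ++ c :: l2) = listMul a l1 * listMul c l2 := by
  induction l1 generalizing a with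
  | nil => simp [listMul]
  | cons h t ih => simp [listMul, ih, mul_assoc]

lemma sort_union (c1 c2 : Finset ℕ) (h : ∀ s ∈ c1, ∀ t ∈ c2, s < t) :
    (c1 ∪ c2).sort (· ≤ ·) = c1.sort (· ≤ ·) ++ c2.sort (· ≤ ·) := by
  have hdisj : Disjoint c1 c2 := by
    rw [Finset.disjoint_left]
    intro a ha1 ha2
    exact absurd (h a ha1 a ha2) (lt_irrefl a)
  apply (fun (hp : List.Perm _ _) h1 h2 => List.Perm.eq_of_pairwise' (r := fun a b : ℕ => a ≤ b) h1 h2 hp)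
  · rw [← Multiset.coe_eq_coe]
    show ((c1 ∪ c2).sort (· ≤ ·) : Multiset ℕ)
      = ((c1.sort (· ≤ ·) : List ℕ) : Multiset ℕ) + ((c2.sort (· ≤ ·) : List ℕ) : Multiset ℕ)
    rw [Finset.sort_eq, Finset.sort_eq, Finset.sort_eq, ← Finset.disjUnion_eq_union c1 c2 hdisj]
    rfl
  · exact Finset.pairwise_sort _ _
  · rw [List.pairwise_append]
    refine ⟨Finset.pairwise_sort _ _, Finset.pairwise_sort _ _, ?_⟩
    intro a ha b hb
    exact le_of_lt (h a ((Finset.mem_sort _).mp ha) b ((Finset.mem_sort _).mp hb))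

lemma finsetMul_singleton {S : Type*} [Semigroup S] (x : ℕ → S) (m : ℕ) :
    finsetMul x {m} = x m := by
  simp [finsetMul, Finset.sort_singleton, listMul]

lemma finsetMul_union {S : Type*} [Semigroup S] (x : ℕ → S) (c1 c2 : Finset ℕ)
    (h1 : c1.Nonempty) (h2 : c2.Nonempty) (h : ∀ s ∈ c1, ∀ t ∈ c2, s < t) :
    finsetMul x (c1 ∪ c2) = finsetMul x c1 * finsetMul x c2 := by
  have hs := sort_union c1 c2 h
  obtain ⟨a1, t1, h1'⟩ : ∃ a t, c1.sort (· ≤ ·) = a :: t := by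
    cases hc : c1.sort (· ≤ ·) with
    | nil =>
      exfalso
      have := congrArg List.length hc
      rw [Finset.length_sort] at this
      simp [Finset.card_eq_zero.mp this] at h1
    | cons a t => exact ⟨a, t, rfl⟩
  obtain ⟨a2, t2, h2'⟩ : ∃ a t, c2.sort (· ≤ ·) = a :: t := by
    cases hc : c2.sort (· ≤ ·) with
    | nil =>
      exfalso
      have := congrArg List.length hc
      rw [Finset.length_sort] at this
      simp [Finset.card_eq_zero.mp this] at h2
    | cons a t => exact ⟨a, t, rfl⟩
  rw [h1', h2'] at hs
  simp only [finsetMul, hs, h1', h2', List.map_append, List.map_cons]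
  exact listMul_append (x a1) (t1.map x) (x a2) (t2.map x)

lemma finsetMul_biUnion {S : Type*} [Semigroup S] (x : ℕ → S) (e : ℕ → FinsetNat)
    (hsep : ∀ i j, i < j → ∀ s ∈ (e i : Finset ℕ), ∀ t ∈ (e j : Finset ℕ), s < t)
    (a : Finset ℕ) (ha : a.Nonempty) :
    finsetMul (fun n => finsetMul x (e n : Finset ℕ)) a
      = finsetMul x (a.biUnion fun n => (e n : Finset ℕ)) := by
  induction a using Finset.induction_on_max with
  | empty => exact absurd ha (by simp)
  | insert m a' hlt ih =>
    rcases a'.eq_empty_or_nonempty with rfl | ha'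
    · rw [Finset.insert_empty]
      rw [Finset.singleton_biUnion, finsetMul_singleton]
    · have hm : m ∉ a' := fun hm => lt_irrefl m (hlt m hm)
      have hins : insert m a' = a' ∪ {m} := by
        ext k; simp [Finset.mem_insert, or_comm]
      have hbi : (a' ∪ {m}).biUnion (fun n => (e n : Finset ℕ))
          = (a'.biUnion fun n => (e n : Finset ℕ)) ∪ (e m : Finset ℕ) := by
        rw [← hins, Finset.biUnion_insert, Finset.union_comm]
      rw [hins, hbi]
      have hbne : (a'.biUnion fun n => (e n : Finset ℕ)).Nonempty := by
        obtain ⟨n, hn⟩ := ha'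
        obtain ⟨s, hs⟩ := (e n).2
        exact ⟨s, Finset.mem_biUnion.mpr ⟨n, hn, hs⟩⟩
      rw [finsetMul_union _ a' {m} ha' (Finset.singleton_nonempty m)
        (fun s hs t ht => by
          rw [Finset.mem_singleton] at ht; exact ht ▸ hlt s hs),
        finsetMul_union x _ _ hbne (e m).2
        (fun s hs t ht => by
          obtain ⟨n, hn, hsn⟩ := Finset.mem_biUnion.mp hs
          exact hsep n m (hlt n hn) s hsn t ht),
        ih ha', finsetMul_singleton]

lemma biUnion_union' (s t : Finset ℕ) (f : ℕ → Finset ℕ) :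
    (s ∪ t).biUnion f = s.biUnion f ∪ t.biUnion f := by
  ext k; simp [Finset.mem_biUnion, or_and_right, exists_or]


/-- If a strongly productive ultrafilter on a semigroup is multiplicatively isomorphic to an
ordered union ultrafilter, then it is sparse. -/
theorem sparse_of_multIsoOrderedUnion {S : Type*} [Semigroup S] (p : Ultrafilter S)
    (hsp : StronglyProductive p) (hiso : MultIsoOrderedUnion p) :
    SparseSP p := by
  obtain ⟨x, hinj, q, hou, hq⟩ := hiso
  set f : FinsetNat → S := fun a => finsetMul x (a : Finset ℕ) with hf
  -- the set of all finite products is in p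
  have hFPx : FPfin x ∈ p := by
    by_contra h
    have hc : (FPfin x)ᶜ ∈ p := Ultrafilter.compl_mem_iff_notMem.mpr h
    have hmem : f ⁻¹' (FPfin x)ᶜ ∈ q := (hq _).mpr ⟨_, hc, rfl⟩
    have hemp : f ⁻¹' (FPfin x)ᶜ = ∅ := by
      ext c
      simp only [Set.mem_preimage, Set.mem_compl_iff, Set.mem_empty_iff_false, iff_false,
        not_not]
      exact ⟨(c : Finset ℕ), c.2, Set.subset_univ _, rfl⟩
    rw [hemp] at hmem
    exact Ultrafilter.empty_notMem hmem
  intro A hA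
  have hfA : f ⁻¹' A ∈ q := (hq _).mpr ⟨A, hA, rfl⟩
  obtain ⟨b, hbord, hbsub, hbq⟩ := hou _ hfA
  -- the set of elements of FU b with an interior gap
  set G : Set FinsetNat := {c | c ∈ FU b ∧ ∃ i, Disjoint (b i : Finset ℕ) (c : Finset ℕ) ∧
    (∃ s ∈ (c : Finset ℕ), ∀ t ∈ (b i : Finset ℕ), s < t) ∧
    (∃ s ∈ (c : Finset ℕ), ∀ t ∈ (b i : Finset ℕ), t < s)} with hGdef
  have hG : G ∈ q := by
    by_contra hGq
    have hGc : Gᶜ ∈ q := Ultrafilter.compl_mem_iff_notMem.mpr hGq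
    obtain ⟨d', hd'ord, hd'sub, _⟩ := hou _ (Filter.inter_mem hbq hGc)
    have hd1 : d' 1 ∈ FU d' :=
      ⟨{1}, Finset.singleton_nonempty 1,
        (Finset.singleton_biUnion (a := 1) (t := fun i => (d' i : Finset ℕ))).symm⟩
    obtain ⟨a1, ha1ne, ha1⟩ := (hd'sub hd1).1
    obtain ⟨i, hi⟩ := ha1ne
    have hbisub : (b i : Finset ℕ) ⊆ (d' 1 : Finset ℕ) := by
      rw [ha1]; exact Finset.subset_biUnion_of_mem (fun j => (b j : Finset ℕ)) hi
    have hc02ne : ((d' 0 : Finset ℕ) ∪ (d' 2 : Finset ℕ)).Nonempty :=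
      Finset.Nonempty.mono Finset.subset_union_left (d' 0).2
    set c02 : FinsetNat := ⟨(d' 0 : Finset ℕ) ∪ (d' 2 : Finset ℕ), hc02ne⟩ with hc02
    have hc02FU : c02 ∈ FU d' := by
      refine ⟨{0, 2}, ⟨0, by simp⟩, ?_⟩
      show (d' 0 : Finset ℕ) ∪ (d' 2 : Finset ℕ) = _
      rw [Finset.biUnion_insert, Finset.singleton_biUnion]
    have hc02G : c02 ∉ G := (hd'sub hc02FU).2
    apply hc02G
    refine ⟨(hd'sub hc02FU).1, i, ?_, ?_, ?_⟩
    · rw [Finset.disjoint_left]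
      intro w hw hwc
      have hw1 : w ∈ (d' 1 : Finset ℕ) := hbisub hw
      rcases Finset.mem_union.mp hwc with h0 | h2
      · exact lt_irrefl w (sep_of_ordered hd'ord Nat.zero_lt_one h0 hw1)
      · exact lt_irrefl w (sep_of_ordered hd'ord Nat.one_lt_two hw1 h2)
    · obtain ⟨s0, hs0⟩ := (d' 0).2
      exact ⟨s0, Finset.mem_union_left _ hs0,
        fun t ht => sep_of_ordered hd'ord Nat.zero_lt_one hs0 (hbisub ht)⟩
    · obtain ⟨s2, hs2⟩ := (d' 2).2
      exact ⟨s2, Finset.mem_union_right _ hs2,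
        fun t ht => sep_of_ordered hd'ord Nat.one_lt_two (hbisub ht) hs2⟩
  obtain ⟨d, hdord, hdsub, hdq⟩ := hou _ hG
  have hdn : ∀ n, d n ∈ G := fun n =>
    hdsub ⟨{n}, Finset.singleton_nonempty n,
      (Finset.singleton_biUnion (a := n) (t := fun i => (d i : Finset ℕ))).symm⟩
  choose β hβne hβrep using fun n => (hdn n).1
  choose g hgdisj hglo hghi using fun n => (hdn n).2
  -- g n is not among the blocks of d n
  have hgβ : ∀ n, g n ∉ β n := by
    intro n hgn
    have hsub : (b (g n) : Finset ℕ) ⊆ (d n : Finset ℕ) := by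
      rw [hβrep n]; exact Finset.subset_biUnion_of_mem (fun i => (b i : Finset ℕ)) hgn
    obtain ⟨w, hw⟩ := (b (g n)).2
    exact (Finset.disjoint_left.mp (hgdisj n) hw) (hsub hw)
  set βu : ℕ → Finset ℕ := fun n => (β n).filter (· < g n) with hβu
  set βv : ℕ → Finset ℕ := fun n => (β n).filter (fun i => g n < i) with hβv
  have hsplit : ∀ n, β n = βu n ∪ βv n := by
    intro n
    ext i
    simp only [hβu, hβv, Finset.mem_union, Finset.mem_filter]
    constructor
    · intro hiβ
      have : i ≠ g n := fun h => hgβ n (h ▸ hiβ)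
      rcases lt_or_gt_of_ne this with h | h
      · exact Or.inl ⟨hiβ, h⟩
      · exact Or.inr ⟨hiβ, h⟩
    · rintro (⟨h, _⟩ | ⟨h, _⟩) <;> exact h
  have hdu : ∀ n, (d n : Finset ℕ)
      = (βu n).biUnion (fun i => (b i : Finset ℕ)) ∪ (βv n).biUnion (fun i => (b i : Finset ℕ)) := by
    intro n
    rw [hβrep n, hsplit n, biUnion_union']
  -- nonemptiness of the two halves
  have hβune : ∀ n, (βu n).Nonempty := by
    intro n
    obtain ⟨s, hsd, hs⟩ := hglo n
    rw [hβrep n] at hsd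
    obtain ⟨i, hiβ, hsi⟩ := Finset.mem_biUnion.mp hsd
    refine ⟨i, Finset.mem_filter.mpr ⟨hiβ, ?_⟩⟩
    have hne : i ≠ g n := fun h => hgβ n (h ▸ hiβ)
    rcases lt_or_gt_of_ne hne with h | h
    · exact h
    · exfalso
      obtain ⟨t, ht⟩ := (b (g n)).2
      exact absurd (hs t ht) (not_lt.mpr (le_of_lt (sep_of_ordered hbord h ht hsi)))
  have hβvne : ∀ n, (βv n).Nonempty := by
    intro n
    obtain ⟨s, hsd, hs⟩ := hghi n
    rw [hβrep n] at hsd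
    obtain ⟨i, hiβ, hsi⟩ := Finset.mem_biUnion.mp hsd
    refine ⟨i, Finset.mem_filter.mpr ⟨hiβ, ?_⟩⟩
    have hne : i ≠ g n := fun h => hgβ n (h ▸ hiβ)
    rcases lt_or_gt_of_ne hne with h | h
    · exfalso
      obtain ⟨t, ht⟩ := (b (g n)).2
      exact absurd (hs t ht) (not_lt.mpr (le_of_lt (sep_of_ordered hbord h hsi ht)))
    · exact h
  have hbine : ∀ (γ : Finset ℕ), γ.Nonempty → (γ.biUnion (fun i => (b i : Finset ℕ))).Nonempty := by
    intro γ ⟨i, hi⟩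
    obtain ⟨w, hw⟩ := (b i).2
    exact ⟨w, Finset.mem_biUnion.mpr ⟨i, hi, hw⟩⟩
  set eu : ℕ → FinsetNat := fun n => ⟨(βu n).biUnion (fun i => (b i : Finset ℕ)), hbine _ (hβune n)⟩ with heu
  set ev : ℕ → FinsetNat := fun n => ⟨(βv n).biUnion (fun i => (b i : Finset ℕ)), hbine _ (hβvne n)⟩ with hev
  -- elementwise ordering facts
  have heu_lt : ∀ n, ∀ s ∈ (eu n : Finset ℕ), ∀ t ∈ (b (g n) : Finset ℕ), s < t := by
    intro n s hs t ht
    obtain ⟨i, hiβ, hsi⟩ := Finset.mem_biUnion.mp hs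
    exact sep_of_ordered hbord (Finset.mem_filter.mp hiβ).2 hsi ht
  have hev_gt : ∀ n, ∀ s ∈ (b (g n) : Finset ℕ), ∀ t ∈ (ev n : Finset ℕ), s < t := by
    intro n s hs t ht
    obtain ⟨i, hiβ, hti⟩ := Finset.mem_biUnion.mp ht
    exact sep_of_ordered hbord (Finset.mem_filter.mp hiβ).2 hs hti
  have heu_sub : ∀ n, (eu n : Finset ℕ) ⊆ (d n : Finset ℕ) := by
    intro n
    rw [hdu n]; exact Finset.subset_union_left
  have hev_sub : ∀ n, (ev n : Finset ℕ) ⊆ (d n : Finset ℕ) := by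
    intro n
    rw [hdu n]; exact Finset.subset_union_right
  -- the interleaved sequence
  set e : ℕ → FinsetNat := fun k =>
    if k % 3 = 0 then eu (k / 3) else if k % 3 = 1 then b (g (k / 3)) else ev (k / 3) with he
  have heord : OrderedSeq e := by
    intro k
    have h3cases : k % 3 = 0 ∨ k % 3 = 1 ∨ k % 3 = 2 := by omega
    rcases h3cases with h3 | h3 | h3
    · have h1 : (k + 1) % 3 = 1 := by omega
      have h2 : (k + 1) / 3 = k / 3 := by omega
      have hek : e k = eu (k / 3) := by rw [he]; simp [h3]
      have hek1 : e (k + 1) = b (g (k / 3)) := by rw [he]; simp [h1, h2]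
      simp only [hek, hek1]
      exact max'_lt_min' _ _ (heu_lt (k / 3))
    · have h1 : (k + 1) % 3 = 2 := by omega
      have h2 : (k + 1) / 3 = k / 3 := by omega
      have hek : e k = b (g (k / 3)) := by rw [he]; simp [h3]
      have hek1 : e (k + 1) = ev (k / 3) := by rw [he]; simp [h1, h2]
      simp only [hek, hek1]
      exact max'_lt_min' _ _ (hev_gt (k / 3))
    · have h1 : (k + 1) % 3 = 0 := by omega
      have h2 : (k + 1) / 3 = k / 3 + 1 := by omega
      have hek : e k = ev (k / 3) := by rw [he]; simp [h3]
      have hek1 : e (k + 1) = eu (k / 3 + 1) := by rw [he]; simp [h1, h2]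
      simp only [hek, hek1]
      exact max'_lt_min' _ _ (fun s hs t ht =>
        sep_of_ordered hdord (Nat.lt_succ_self _) (hev_sub _ hs) (heu_sub _ ht))
  have hesep : ∀ i j, i < j → ∀ s ∈ (e i : Finset ℕ), ∀ t ∈ (e j : Finset ℕ), s < t :=
    fun i j hij s hs t ht => sep_of_ordered heord hij hs ht
  -- block representation of e
  have heblocks : ∀ k, ∃ γ : Finset ℕ, γ.Nonempty ∧
      (e k : Finset ℕ) = γ.biUnion (fun i => (b i : Finset ℕ)) := by
    intro k
    rw [he]
    have h3cases : k % 3 = 0 ∨ k % 3 = 1 ∨ k % 3 = 2 := by omega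
    rcases h3cases with h3 | h3 | h3
    · exact ⟨βu (k / 3), hβune _, by simp [h3, heu]⟩
    · exact ⟨{g (k / 3)}, Finset.singleton_nonempty _, by simp [h3, Finset.singleton_biUnion]⟩
    · exact ⟨βv (k / 3), hβvne _, by simp [h3, hev]⟩
  choose γ hγne hγrep using heblocks
  -- the sequence and the index set
  set y : ℕ → S := fun k => finsetMul x (e k : Finset ℕ) with hy
  set D : Set ℕ := {k | k % 3 ≠ 1} with hD
  have hhom : ∀ a : Finset ℕ, a.Nonempty →
      finsetMul y a = finsetMul x (a.biUnion fun n => (e n : Finset ℕ)) :=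
    finsetMul_biUnion x e hesep
  refine ⟨y, D, ?_, ?_, ?_, ?_⟩
  · exact Set.infinite_of_injective_forall_mem (f := fun n : ℕ => 3 * n)
      (fun a b h => by dsimp at h; omega)
      (fun n => by show 3 * n % 3 ≠ 1; omega)
  · exact Set.infinite_of_injective_forall_mem (f := fun n : ℕ => 3 * n + 1)
      (fun a b h => by dsimp at h; omega)
      (fun n => by show ¬ (3 * n + 1) % 3 ≠ 1; omega)
  · rintro s ⟨a, hane, -, rfl⟩
    rw [hhom a hane]
    have hne : (a.biUnion fun n => (e n : Finset ℕ)).Nonempty := by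
      obtain ⟨n, hn⟩ := hane
      obtain ⟨w, hw⟩ := (e n).2
      exact ⟨w, Finset.mem_biUnion.mpr ⟨n, hn, hw⟩⟩
    have hcFU : (⟨a.biUnion fun n => (e n : Finset ℕ), hne⟩ : FinsetNat) ∈ FU b := by
      refine ⟨a.biUnion γ, ?_, ?_⟩
      · obtain ⟨n, hn⟩ := hane
        obtain ⟨i, hi⟩ := hγne n
        exact ⟨i, Finset.mem_biUnion.mpr ⟨n, hn, hi⟩⟩
      · show a.biUnion (fun n => (e n : Finset ℕ)) = _
        rw [Finset.biUnion_biUnion]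
        exact Finset.biUnion_congr rfl (fun n _ => hγrep n)
    exact hbsub hcFU
  · -- FPIn y D ∈ p
    set W : Set FinsetNat := {c | ∃ a : Finset ℕ, a.Nonempty ∧ ↑a ⊆ D ∧
      (c : Finset ℕ) = a.biUnion fun n => (e n : Finset ℕ)} with hW
    have hWq : W ∈ q := by
      refine Filter.mem_of_superset hdq ?_
      rintro c ⟨a, hane, hrep⟩
      refine ⟨a.biUnion (fun n => ({3 * n, 3 * n + 2} : Finset ℕ)), ?_, ?_, ?_⟩
      · obtain ⟨n, hn⟩ := hane
        exact ⟨3 * n, Finset.mem_biUnion.mpr ⟨n, hn, by simp⟩⟩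
      · intro k hk
        obtain ⟨n, _, hkn⟩ := Finset.mem_biUnion.mp hk
        simp only [Finset.mem_insert, Finset.mem_singleton] at hkn
        show k % 3 ≠ 1
        rcases hkn with rfl | rfl <;> omega
      · rw [hrep, Finset.biUnion_biUnion]
        refine Finset.biUnion_congr rfl (fun n _ => ?_)
        have h30 : e (3 * n) = eu n := by
          rw [he]
          have h1 : (3 * n) % 3 = 0 := by omega
          have h2 : (3 * n) / 3 = n := by omega
          simp [h1, h2]
        have h32 : e (3 * n + 2) = ev n := by
          rw [he]
          have h1 : (3 * n + 2) % 3 = 2 := by omega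
          have h2 : (3 * n + 2) / 3 = n := by omega
          simp [h1, h2]
        show (d n : Finset ℕ) = ({3 * n, 3 * n + 2} : Finset ℕ).biUnion fun k => (e k : Finset ℕ)
        rw [show ({3 * n, 3 * n + 2} : Finset ℕ) = insert (3 * n) {3 * n + 2} from rfl,
          Finset.biUnion_insert, Finset.singleton_biUnion, h30, h32, hdu n]
    obtain ⟨A', hA', hWpre⟩ := (hq W).mp hWq
    refine Filter.mem_of_superset (Filter.inter_mem hA' hFPx) ?_
    rintro s ⟨hsA', a0, h0ne, -, rfl⟩
    have hcW : (⟨a0, h0ne⟩ : FinsetNat) ∈ W := by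
      rw [hWpre]
      exact hsA'
    obtain ⟨a, hane, haD, hca⟩ := hcW
    refine ⟨a, hane, haD, ?_⟩
    rw [hhom a hane, ← hca]
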